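/- Let C be an s×m matrix with non-negative rational entries and non-zero columns, let {I_n} be the filtration of the covering polyhedron Q(C), and let α̂(F) = lim_{n→∞} α_F(n)/n be the Waldschmidt constant. Then α̂(F) equals the optimal value of the linear program: minimize y_1 + ... + y_s subject to yC ≥ 1 and y ≥ 0; moreover this optimal value is attained at a rational vertex of Q(C). -/

import Mathlib

open MvPolynomial

noncomputable section

/-- Membership of a rational point in the covering polyhedron `Q(C) = {x : x ≥ 0, xC ≥ 1}`. -/
def memCP {s m : ℕ} (C : Matrix (Fin s) (Fin m) ℚ) (x : Fin s → ℚ) : Prop :=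
  (∀ i, 0 ≤ x i) ∧ ∀ j, 1 ≤ ∑ i, x i * C i j

/-- The covering polyhedron `Q(C) ⊆ ℝ^s` of the matrix `C`. -/
def CPset {s m : ℕ} (C : Matrix (Fin s) (Fin m) ℚ) : Set (Fin s → ℝ) :=
  {x | (∀ i, 0 ≤ x i) ∧ ∀ j, (1 : ℝ) ≤ ∑ i, x i * (C i j : ℝ)}

/-- The `n`-th ideal of the filtration associated to the covering polyhedron of `C`. -/
def filtIdeal (K : Type*) [Field K] {s m : ℕ} (C : Matrix (Fin s) (Fin m) ℚ) (n : ℕ) :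
    Ideal (MvPolynomial (Fin s) K) :=
  if n = 0 then ⊤ else
    Ideal.span { f | ∃ a : Fin s →₀ ℕ,
      f = monomial a 1 ∧ memCP C (fun i => (a i : ℚ) / n) }

/-- `α_F(n)`: the least degree of a monomial in `I_n`. -/
def alphaF (K : Type*) [Field K] {s m : ℕ} (C : Matrix (Fin s) (Fin m) ℚ) (n : ℕ) : ℕ :=
  sInf { d | ∃ a : Fin s →₀ ℕ,
    (monomial a 1 : MvPolynomial (Fin s) K) ∈ filtIdeal K C n ∧ d = ∑ i, a i }

/-- The Waldschmidt constant `α̂(F) = lim α_F(n)/n = inf α_F(n)/n`. -/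
def waldschmidt (K : Type*) [Field K] {s m : ℕ} (C : Matrix (Fin s) (Fin m) ℚ) : ℝ :=
  ⨅ n : ℕ+, (alphaF K C (n : ℕ) : ℝ) / (n : ℕ)

namespace CPaux
variable {s m : ℕ} (C : Matrix (Fin s) (Fin m) ℚ)

/-- rows of the constraint system, over ℚ -/
def rowsQ : Fin s ⊕ Fin m → Fin s → ℚ := Sum.elim (fun i => Pi.single i (1:ℚ)) (fun j i => C i j)
/-- right hand sides -/
def rhsQ : Fin s ⊕ Fin m → ℚ := Sum.elim 0 1

lemma mem_CPset_iff (x : Fin s → ℝ) :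
    x ∈ CPset C ↔ ∀ r, ((rhsQ r : ℚ) : ℝ) ≤ ∑ i, (rowsQ C r i : ℝ) * x i := by
  constructor
  · rintro ⟨h0, h1⟩ (i | j)
    · simpa [rowsQ, rhsQ, Pi.single_apply, apply_ite (Rat.cast : ℚ → ℝ), mul_ite, mul_comm] using h0 i
    · simpa [rowsQ, rhsQ, mul_comm] using h1 j
  · intro h
    refine ⟨fun i => ?_, fun j => ?_⟩
    · simpa [rowsQ, rhsQ, Pi.single_apply, apply_ite (Rat.cast : ℚ → ℝ), mul_ite, mul_comm] using h (Sum.inl i)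
    · simpa [rowsQ, rhsQ, mul_comm] using h (Sum.inr j)

lemma memCP_iff (q : Fin s → ℚ) : memCP C q ↔ (fun i => (q i : ℝ)) ∈ CPset C := by
  unfold memCP CPset
  constructor
  · rintro ⟨h0, h1⟩
    refine ⟨fun i => by have := h0 i; simp only []; exact_mod_cast this, fun j => ?_⟩
    have := h1 j
    push_cast
    exact_mod_cast this
  · rintro ⟨h0, h1⟩
    refine ⟨fun i => by have := h0 i; simp at this; exact_mod_cast this, fun j => ?_⟩
    have := h1 j
    push_cast at this
    exact_mod_cast this

lemma CPset_convex : Convex ℝ (CPset C) := by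
  rintro x ⟨hx0, hx1⟩ y ⟨hy0, hy1⟩ a b ha hb hab
  constructor
  · intro i
    have : (a • x + b • y) i = a * x i + b * y i := rfl
    rw [this]
    have := hx0 i; have := hy0 i
    positivity
  · intro j
    have : ∑ i, (a • x + b • y) i * (C i j : ℝ)
        = a * ∑ i, x i * (C i j : ℝ) + b * ∑ i, y i * (C i j : ℝ) := by
      rw [Finset.mul_sum, Finset.mul_sum, ← Finset.sum_add_distrib]
      exact Finset.sum_congr rfl fun i _ => by show (a * x i + b * y i) * _ = _; ring
    rw [this]
    calc (1:ℝ) = a * 1 + b * 1 := by rw [mul_one, mul_one, hab]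
    _ ≤ a * ∑ i, x i * (C i j : ℝ) + b * ∑ i, y i * (C i j : ℝ) := by
        gcongr <;> [exact hx1 j; exact hy1 j]

lemma CPset_closed : IsClosed (CPset C) := by
  have : CPset C = (⋂ i, {x : Fin s → ℝ | 0 ≤ x i}) ∩
      (⋂ j, {x : Fin s → ℝ | (1:ℝ) ≤ ∑ i, x i * (C i j : ℝ)}) := by
    ext x; simp [CPset]
  rw [this]
  refine IsClosed.inter (isClosed_iInter fun i => ?_) (isClosed_iInter fun j => ?_)
  · exact isClosed_le continuous_const (continuous_apply i)
  · exact isClosed_le continuous_const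
      (continuous_finset_sum _ fun i _ => (continuous_apply i).mul continuous_const)

/-- there is a natural constant vector in the polyhedron -/
lemma exists_nat_const (hC : ∀ i j, 0 ≤ C i j) (hcol : ∀ j, ∃ i, C i j ≠ 0) :
    ∃ M : ℕ, ∀ j, 1 ≤ ∑ i, (M : ℚ) * C i j := by
  have hc : ∀ j, 0 < ∑ i, C i j := by
    intro j
    obtain ⟨i, hi⟩ := hcol j
    exact Finset.sum_pos' (fun i _ => hC i j) ⟨i, Finset.mem_univ i, lt_of_le_of_ne (hC i j) (Ne.symm hi)⟩
  obtain ⟨M, hM⟩ := exists_nat_ge (∑ j, (∑ i, C i j)⁻¹)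
  refine ⟨M, fun j => ?_⟩
  have h1 : (∑ i, C i j)⁻¹ ≤ (M : ℚ) := le_trans (Finset.single_le_sum (f := fun j => (∑ i, C i j)⁻¹)
      (fun j _ => le_of_lt (inv_pos.mpr (hc j))) (Finset.mem_univ j)) hM
  calc (1:ℚ) = (∑ i, C i j)⁻¹ * (∑ i, C i j) := (inv_mul_cancel₀ (ne_of_gt (hc j))).symm
  _ ≤ (M:ℚ) * (∑ i, C i j) := by gcongr; exact hc j |>.le
  _ = ∑ i, (M:ℚ) * C i j := Finset.mul_sum _ _ _

lemma exists_extreme_min (hC : ∀ i j, 0 ≤ C i j) (hcol : ∀ j, ∃ i, C i j ≠ 0) :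
    ∃ x ∈ Set.extremePoints ℝ (CPset C), ∀ y ∈ CPset C, ∑ i, x i ≤ ∑ i, y i := by
  classical
  obtain ⟨M, hM⟩ := exists_nat_const C hC hcol
  set x0 : Fin s → ℝ := fun _ => (M : ℝ) with hx0def
  have hx0 : x0 ∈ CPset C := by
    refine ⟨fun i => by positivity, fun j => ?_⟩
    have := hM j
    have : ((1:ℚ):ℝ) ≤ ((∑ i, (M:ℚ) * C i j : ℚ) : ℝ) := by exact_mod_cast this
    push_cast at this
    simpa [hx0def] using this
  set B : ℝ := ∑ i, x0 i with hBdef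
  set Kc : Set (Fin s → ℝ) := CPset C ∩ {y | ∑ i, y i ≤ B} with hKdef
  have hKclosed : IsClosed Kc :=
    (CPset_closed C).inter (isClosed_le (continuous_finset_sum _ fun i _ => continuous_apply i)
      continuous_const)
  have hKsub : Kc ⊆ Set.pi Set.univ (fun _ : Fin s => Set.Icc (0:ℝ) B) := by
    rintro y ⟨hyQ, hyB⟩ i _
    exact ⟨hyQ.1 i, le_trans (Finset.single_le_sum (fun i _ => hyQ.1 i) (Finset.mem_univ i)) hyB⟩
  have hKcomp : IsCompact Kc :=
    IsCompact.of_isClosed_subset (isCompact_univ_pi fun _ => isCompact_Icc) hKclosed hKsub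
  have hKne : Kc.Nonempty := ⟨x0, hx0, le_refl B⟩
  have hsumcont : Continuous (fun y : Fin s → ℝ => ∑ i, y i) :=
    continuous_finset_sum _ fun i _ => continuous_apply i
  obtain ⟨xs, hxsK, hxsmin⟩ := hKcomp.exists_isMinOn hKne hsumcont.continuousOn
  have hglobal : ∀ y ∈ CPset C, ∑ i, xs i ≤ ∑ i, y i := by
    intro y hy
    by_cases hyB : ∑ i, y i ≤ B
    · exact hxsmin ⟨hy, hyB⟩
    · exact le_trans (hxsmin ⟨hx0, le_refl B⟩) (le_of_not_ge hyB)
  -- the exposed face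
  set l : (Fin s → ℝ) →L[ℝ] ℝ := -(∑ i, ContinuousLinearMap.proj i) with hldef
  have hl : ∀ y : Fin s → ℝ, l y = -(∑ i, y i) := by
    intro y
    simp [hldef, ContinuousLinearMap.sum_apply, ContinuousLinearMap.proj_apply]
  set F : Set (Fin s → ℝ) := {x ∈ CPset C | ∀ y ∈ CPset C, l y ≤ l x} with hFdef
  have hexp : IsExposed ℝ (CPset C) F := fun _ => ⟨l, rfl⟩
  have hxsF : xs ∈ F := by
    refine ⟨hxsK.1, fun y hy => ?_⟩
    rw [hl, hl, neg_le_neg_iff]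
    exact hglobal y hy
  have hFsub : F ⊆ Kc := by
    rintro x ⟨hxQ, hxmax⟩
    refine ⟨hxQ, ?_⟩
    have := hxmax xs hxsK.1
    rw [hl, hl, neg_le_neg_iff] at this
    exact le_trans this (hxsmin ⟨hx0, le_refl B⟩)
  have hFclosed : IsClosed F := hexp.isClosed (CPset_closed C)
  have hFcomp : IsCompact F := IsCompact.of_isClosed_subset hKcomp hFclosed hFsub
  obtain ⟨z, hz⟩ := hFcomp.extremePoints_nonempty ⟨xs, hxsF⟩
  refine ⟨z, hexp.isExtreme.extremePoints_subset_extremePoints hz, fun y hy => ?_⟩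
  have hzF : z ∈ F := hz.1
  have := hzF.2 y hy
  rw [hl, hl, neg_le_neg_iff] at this
  exact this

lemma extremePoint_rat (x : Fin s → ℝ) (hx : x ∈ Set.extremePoints ℝ (CPset C)) :
    ∃ β : Fin s → ℚ, (fun i => (β i : ℝ)) = x := by
  classical
  have hxQ : ∀ r, ((rhsQ r : ℚ) : ℝ) ≤ ∑ i, (rowsQ C r i : ℝ) * x i :=
    (mem_CPset_iff C x).mp hx.1
  set T : Set (Fin s ⊕ Fin m) := {r | ∑ i, (rowsQ C r i : ℝ) * x i = ((rhsQ r : ℚ) : ℝ)} with hTdef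
  -- linearity helper
  have hlin : ∀ (r : Fin s ⊕ Fin m) (c : ℝ) (d : Fin s → ℝ),
      ∑ i, (rowsQ C r i : ℝ) * (x i + c * d i)
        = (∑ i, (rowsQ C r i : ℝ) * x i) + c * ∑ i, (rowsQ C r i : ℝ) * d i := by
    intro r c d
    rw [Finset.mul_sum, ← Finset.sum_add_distrib]
    exact Finset.sum_congr rfl fun i _ => by ring
  -- Claim: directions vanishing on all tight constraints are zero
  have hker : ∀ d : Fin s → ℝ, (∀ r ∈ T, ∑ i, (rowsQ C r i : ℝ) * d i = 0) → d = 0 := by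
    intro d hd
    set P : Finset (Fin s ⊕ Fin m) := Finset.univ.filter (fun r => r ∉ T) with hPdef
    have hslack : ∀ r ∈ P, (0:ℝ) < (∑ i, (rowsQ C r i : ℝ) * x i) - ((rhsQ r : ℚ) : ℝ) := by
      intro r hr
      have hrT : r ∉ T := (Finset.mem_filter.mp hr).2
      have := hxQ r
      have hne : ∑ i, (rowsQ C r i : ℝ) * x i ≠ ((rhsQ r : ℚ) : ℝ) := hrT
      cases' lt_or_eq_of_le this with h h
      · linarith
      · exact absurd h.symm hne
    have hex : ∃ ε : ℝ, 0 < ε ∧ ∀ r ∈ P,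
        ε * |∑ i, (rowsQ C r i : ℝ) * d i| ≤ (∑ i, (rowsQ C r i : ℝ) * x i) - ((rhsQ r : ℚ) : ℝ) := by
      set g : (Fin s ⊕ Fin m) → ℝ := fun r =>
        ((∑ i, (rowsQ C r i : ℝ) * x i) - ((rhsQ r : ℚ) : ℝ)) / (|∑ i, (rowsQ C r i : ℝ) * d i| + 1)
        with hgdef
      have hgpos : ∀ r ∈ P, 0 < g r := fun r hr =>
        div_pos (hslack r hr) (by positivity)
      rcases P.eq_empty_or_nonempty with hP | hP
      · exact ⟨1, one_pos, fun r hr => by rw [hP] at hr; exact absurd hr (Finset.notMem_empty r)⟩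
      · obtain ⟨r0, hr0, hr0min⟩ := P.exists_min_image g hP
        refine ⟨g r0, hgpos r0 hr0, fun r hr => ?_⟩
        have h1 : g r0 ≤ g r := hr0min r hr
        set a := |∑ i, (rowsQ C r i : ℝ) * d i| with hadef
        have ha : 0 ≤ a := abs_nonneg _
        have hslackr := hslack r hr
        calc g r0 * a ≤ g r * a := by gcongr
        _ ≤ (∑ i, (rowsQ C r i : ℝ) * x i) - ((rhsQ r : ℚ) : ℝ) := by
            rw [hgdef]
            rw [div_mul_eq_mul_div, div_le_iff₀ (by positivity)]
            nlinarith
    obtain ⟨ε, hε, hεP⟩ := hex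
    have hmem : ∀ c : ℝ, |c| = ε → (fun i => x i + c * d i) ∈ CPset C := by
      intro c hc
      rw [mem_CPset_iff]
      intro r
      rw [hlin]
      by_cases hrT : r ∈ T
      · rw [hd r hrT, mul_zero, add_zero]
        exact le_of_eq (hrT).symm
      · have hrP : r ∈ P := Finset.mem_filter.mpr ⟨Finset.mem_univ r, hrT⟩
        have h1 := hεP r hrP
        have h2 : -(ε * |∑ i, (rowsQ C r i : ℝ) * d i|) ≤ c * ∑ i, (rowsQ C r i : ℝ) * d i := by
          rw [← hc, ← abs_mul]
          exact neg_abs_le _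
        linarith
    have hplus := hmem ε (abs_of_pos hε)
    have hminus := hmem (-ε) (by rw [abs_neg]; exact abs_of_pos hε)
    have hseg : x ∈ openSegment ℝ (fun i => x i + ε * d i) (fun i => x i + (-ε) * d i) := by
      refine ⟨1/2, 1/2, by norm_num, by norm_num, by norm_num, ?_⟩
      funext i
      simp only [Pi.add_apply, Pi.smul_apply, smul_eq_mul]
      ring
    have h1 := hx.2 hplus hminus hseg
    funext i
    have h2 : x i + ε * d i = x i := congrFun h1 i
    have h3 : ε * d i = 0 := by linarith
    have h4 := (mul_eq_zero.mp h3).resolve_left (ne_of_gt hε)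
    simpa using h4
  -- the tight constraint matrix over ℚ
  set Tf : Finset (Fin s ⊕ Fin m) := Finset.univ.filter (fun r => r ∈ T) with hTfdef
  set M : Matrix Tf (Fin s) ℚ := fun r i => rowsQ C r.1 i with hMdef
  have hMker : ∀ v : Fin s → ℚ, M.mulVec v = 0 → v = 0 := by
    intro v hv
    have hd : (fun i => (v i : ℝ)) = 0 := by
      apply hker
      intro r hrT
      have hr : r ∈ Tf := Finset.mem_filter.mpr ⟨Finset.mem_univ r, hrT⟩
      have := congrFun hv ⟨r, hr⟩
      have h2 : (∑ i, rowsQ C r i * v i : ℚ) = 0 := this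
      have h3 : ((∑ i, rowsQ C r i * v i : ℚ) : ℝ) = 0 := by exact_mod_cast h2
      push_cast at h3
      convert h3 using 1
    funext i
    have := congrFun hd i
    simp only [Pi.zero_apply] at this
    exact_mod_cast this
  have hkerbot : LinearMap.ker M.mulVecLin = ⊥ := Matrix.ker_mulVecLin_eq_bot_iff.mpr hMker
  obtain ⟨g, hg⟩ := M.mulVecLin.exists_leftInverse_of_injective hkerbot
  set N : Matrix (Fin s) Tf ℚ := LinearMap.toMatrix' g with hNdef
  have hNapp : ∀ w : Tf → ℚ, N.mulVec w = g w := by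
    intro w
    rw [← Matrix.toLin'_apply, hNdef, Matrix.toLin'_toMatrix']
  have hNM : N * M = 1 := by
    ext i j
    have h1 : (N * M).mulVec (Pi.single j 1) = Pi.single j 1 := by
      rw [← Matrix.mulVec_mulVec, hNapp, ← Matrix.mulVecLin_apply, ← LinearMap.comp_apply, hg]
      rfl
    have := congrFun h1 i
    rw [Matrix.mulVec_single_one] at this
    simp only [Matrix.col_apply] at this
    rw [this, Matrix.one_apply, Pi.single_apply]
  -- pass to ℝ
  set c : ℚ →+* ℝ := Rat.castHom ℝ with hcdef
  have h1R : (N.map c) * (M.map c) = 1 := by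
    rw [← Matrix.map_mul, hNM]
    exact Matrix.map_one c (map_zero c) (map_one c)
  have hMx : (M.map c).mulVec x = fun r => ((rhsQ r.1 : ℚ) : ℝ) := by
    funext r
    have hrT : r.1 ∈ T := (Finset.mem_filter.mp r.2).2
    show ∑ i, c (M r i) * x i = _
    exact hrT
  set β : Fin s → ℚ := N.mulVec (fun r => rhsQ r.1) with hβdef
  refine ⟨β, ?_⟩
  have hcast : (fun i => (β i : ℝ)) = (N.map c).mulVec (fun r => ((rhsQ r.1 : ℚ) : ℝ)) := by
    funext i
    show ((∑ r, N i r * rhsQ r.1 : ℚ) : ℝ) = ∑ r, c (N i r) * ((rhsQ r.1 : ℚ) : ℝ)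
    push_cast
    rfl
  rw [hcast, ← hMx, Matrix.mulVec_mulVec, h1R, Matrix.one_mulVec]


variable {s m : ℕ} (C : Matrix (Fin s) (Fin m) ℚ)

lemma monomial_mem_iff (K : Type*) [Field K] (n : ℕ) (hn : n ≠ 0) (a : Fin s →₀ ℕ) :
    (monomial a 1 : MvPolynomial (Fin s) K) ∈ filtIdeal K C n ↔
      ∃ b : Fin s →₀ ℕ, b ≤ a ∧ memCP C (fun i => (b i : ℚ) / n) := by
  classical
  rw [filtIdeal, if_neg hn]
  have hset : { f : MvPolynomial (Fin s) K | ∃ a : Fin s →₀ ℕ,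
      f = monomial a 1 ∧ memCP C (fun i => (a i : ℚ) / n) }
      = (fun b => monomial b (1:K)) '' {b : Fin s →₀ ℕ | memCP C (fun i => (b i : ℚ) / n)} := by
    ext f
    constructor
    · rintro ⟨b, rfl, hb⟩; exact ⟨b, hb, rfl⟩
    · rintro ⟨b, hb, rfl⟩; exact ⟨b, rfl, hb⟩
  rw [hset, mem_ideal_span_monomial_image]
  have hsupp : (monomial a (1:K)).support = {a} := by
    rw [support_monomial, if_neg one_ne_zero]
  rw [hsupp]
  simp only [Finset.mem_singleton, forall_eq]
  constructor
  · rintro ⟨b, hb, hble⟩; exact ⟨b, hble, hb⟩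
  · rintro ⟨b, hble, hb⟩; exact ⟨b, hb, hble⟩

lemma exists_mem_alphaSet (K : Type*) [Field K] (hC : ∀ i j, 0 ≤ C i j)
    (hcol : ∀ j, ∃ i, C i j ≠ 0) (n : ℕ) (hn : n ≠ 0) :
    ∃ a : Fin s →₀ ℕ, (monomial a 1 : MvPolynomial (Fin s) K) ∈ filtIdeal K C n := by
  obtain ⟨M, hM⟩ := exists_nat_const C hC hcol
  set a : Fin s →₀ ℕ := Finsupp.equivFunOnFinite.symm (fun _ => n * M) with hadef
  refine ⟨a, ?_⟩
  rw [monomial_mem_iff C K n hn]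
  refine ⟨a, le_refl a, fun i => by positivity, fun j => ?_⟩
  have ha : ∀ i, ((a i : ℚ)) / n = (M : ℚ) := by
    intro i
    have : a i = n * M := rfl
    rw [this]
    push_cast
    field_simp
  calc (1:ℚ) ≤ ∑ i, (M:ℚ) * C i j := hM j
  _ = ∑ i, (a i : ℚ) / n * C i j := by
      exact Finset.sum_congr rfl fun i _ => by rw [ha i]
end CPaux

/-- The linear program `min ∑ y_i` subject to `yC ≥ 1`, `y ≥ 0` has optimal value equal
to the Waldschmidt constant of the filtration, attained at a rational vertex of `Q(C)`. -/
theorem stmt4 {K : Type*} [Field K] {s m : ℕ} (C : Matrix (Fin s) (Fin m) ℚ)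
    (hC : ∀ i j, 0 ≤ C i j) (hcol : ∀ j, ∃ i, C i j ≠ 0) :
    ∃ β : Fin s → ℚ,
      (fun i => (β i : ℝ)) ∈ Set.extremePoints ℝ (CPset C) ∧
      (∑ i, (β i : ℝ)) = waldschmidt K C ∧
      ∀ y ∈ CPset C, waldschmidt K C ≤ ∑ i, y i := by
  classical
  obtain ⟨xe, hxe, hmin⟩ := CPaux.exists_extreme_min C hC hcol
  obtain ⟨β, hβ⟩ := CPaux.extremePoint_rat C xe hxe
  have hβmem : (fun i => (β i : ℝ)) ∈ Set.extremePoints ℝ (CPset C) := hβ ▸ hxe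
  have hsum : (∑ i, (β i : ℝ)) = ∑ i, xe i :=
    Finset.sum_congr rfl fun i _ => congrFun hβ i
  have hβQ : memCP C β := (CPaux.memCP_iff C β).mpr (hβ ▸ hxe.1)
  -- lower bound
  have hlow : ∀ n : ℕ+, (∑ i, (β i : ℝ)) ≤ (alphaF K C (n:ℕ) : ℝ) / ((n:ℕ) : ℝ) := by
    intro n
    have hn : (n:ℕ) ≠ 0 := n.ne_zero
    have hnR : (0:ℝ) < ((n:ℕ) : ℝ) := by exact_mod_cast n.pos
    have hAne : { d | ∃ a : Fin s →₀ ℕ,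
        (monomial a 1 : MvPolynomial (Fin s) K) ∈ filtIdeal K C (n:ℕ) ∧ d = ∑ i, a i }.Nonempty := by
      obtain ⟨a, ha⟩ := CPaux.exists_mem_alphaSet C K hC hcol (n:ℕ) hn
      exact ⟨∑ i, a i, a, ha, rfl⟩
    have hmem : alphaF K C (n:ℕ) ∈ _ := Nat.sInf_mem hAne
    obtain ⟨a, ham, had⟩ := hmem
    rw [CPaux.monomial_mem_iff C K (n:ℕ) hn] at ham
    obtain ⟨b, hble, hbmem⟩ := ham
    have hyQ : (fun i => (((b i : ℚ) / (n:ℕ) : ℚ) : ℝ)) ∈ CPset C :=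
      (CPaux.memCP_iff C _).mp hbmem
    have h1 : ∑ i, xe i ≤ ∑ i, (((b i : ℚ) / (n:ℕ) : ℚ) : ℝ) := hmin _ hyQ
    have h2 : ∑ i, (((b i : ℚ) / (n:ℕ) : ℚ) : ℝ) = (∑ i, (b i : ℝ)) / ((n:ℕ):ℝ) := by
      rw [Finset.sum_div]
      exact Finset.sum_congr rfl fun i _ => by push_cast; ring
    have h3 : (∑ i, (b i : ℝ)) ≤ (∑ i, (a i : ℝ)) := by
      apply Finset.sum_le_sum
      intro i _
      exact_mod_cast (Finsupp.le_def.mp hble) i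
    have h4 : (∑ i, (a i : ℝ)) = (alphaF K C (n:ℕ) : ℝ) := by
      rw [had]; push_cast; ring
    rw [hsum]
    calc ∑ i, xe i ≤ (∑ i, (b i : ℝ)) / ((n:ℕ):ℝ) := by rw [← h2]; exact h1
    _ ≤ (∑ i, (a i : ℝ)) / ((n:ℕ):ℝ) := by gcongr
    _ = (alphaF K C (n:ℕ) : ℝ) / ((n:ℕ):ℝ) := by rw [h4]
  -- upper bound
  have hupp : waldschmidt K C ≤ ∑ i, (β i : ℝ) := by
    set n0 : ℕ := ∏ i, (β i).den with hn0def
    have hn0 : 0 < n0 := Finset.prod_pos fun i _ => (β i).pos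
    have hβnn : ∀ i, 0 ≤ β i := hβQ.1
    set aN : Fin s → ℕ := fun i => (β i).num.toNat * (n0 / (β i).den) with haNdef
    have haN : ∀ i, (aN i : ℚ) = β i * n0 := by
      intro i
      have hdvd : (β i).den ∣ n0 := Finset.dvd_prod_of_mem _ (Finset.mem_univ i)
      have hnum : ((β i).num.toNat : ℚ) = ((β i).num : ℚ) := by
        exact_mod_cast Int.toNat_of_nonneg (Rat.num_nonneg.mpr (hβnn i))
      rw [haNdef]
      push_cast [Nat.cast_div hdvd (by exact_mod_cast (β i).den_nz : ((β i).den : ℚ) ≠ 0)]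
      rw [hnum]
      have hden : ((β i).den : ℚ) ≠ 0 := by exact_mod_cast (β i).den_nz
      have hq : ((β i).num : ℚ) = β i * (β i).den := (div_eq_iff hden).mp (Rat.num_div_den (β i))
      field_simp
      linear_combination hq
    have haN' : ∀ i, (aN i : ℚ) / (n0 : ℚ) = β i := by
      intro i
      rw [haN i, mul_div_assoc, div_self (by exact_mod_cast hn0.ne' : ((n0:ℕ) : ℚ) ≠ 0), mul_one]
    set a : Fin s →₀ ℕ := Finsupp.equivFunOnFinite.symm aN with hadef
    have haa : ∀ i, a i = aN i := fun i => rfl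
    have hamem : memCP C (fun i => (a i : ℚ) / (n0:ℕ)) := by
      have : (fun i => (a i : ℚ) / (n0:ℕ)) = β := by
        funext i; rw [haa i]; exact haN' i
      rw [this]; exact hβQ
    have hI : (monomial a 1 : MvPolynomial (Fin s) K) ∈ filtIdeal K C n0 := by
      rw [filtIdeal, if_neg hn0.ne']
      exact Ideal.subset_span ⟨a, rfl, hamem⟩
    have halpha : alphaF K C n0 ≤ ∑ i, a i := Nat.sInf_le ⟨a, hI, rfl⟩
    have hbdd : BddBelow (Set.range fun n : ℕ+ => (alphaF K C (n:ℕ) : ℝ) / ((n:ℕ):ℝ)) := by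
      refine ⟨0, ?_⟩
      rintro z ⟨n, rfl⟩
      positivity
    calc waldschmidt K C ≤ (alphaF K C ((⟨n0, hn0⟩ : ℕ+):ℕ) : ℝ) / (((⟨n0, hn0⟩ : ℕ+):ℕ):ℝ) :=
          ciInf_le hbdd ⟨n0, hn0⟩
    _ ≤ ((∑ i, a i : ℕ) : ℝ) / ((n0:ℕ):ℝ) := by
        have : (0:ℝ) < ((n0:ℕ):ℝ) := by exact_mod_cast hn0
        gcongr
    _ = ∑ i, (β i : ℝ) := by
        push_cast
        rw [Finset.sum_div]
        exact Finset.sum_congr rfl fun i _ => by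
          have h := congrArg (Rat.cast (K := ℝ)) (haN' i)
          push_cast at h
          rw [haa i]
          exact_mod_cast h
  have hw : (∑ i, (β i : ℝ)) = waldschmidt K C :=
    le_antisymm (le_ciInf hlow) hupp
  refine ⟨β, hβmem, hw, fun y hy => ?_⟩
  rw [← hw, hsum]
  exact hmin y hy
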